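/- Let F/F₀ be an unramified quadratic extension of p-adic fields with uniformizer ϖ, and let 𝕍 be a nondegenerate 3-dimensional F/F₀-Hermitian space. Let u ∈ 𝕍 be a nonzero isotropic vector and let Λ be a vertex lattice of type 1 (Λ ⊆ Λ^∨ ⊆ ϖ^{-1}Λ with dim(Λ^∨/Λ) = 1) with u ∈ Λ and u ∉ ϖΛ. Then there exists a vertex lattice Λ' of type 3 with u ∈ Λ' ⊆ Λ. -/

import Mathlib

section Stmt7Aux


variable {O F V : Type*} [CommRing O] [IsDomain O] [IsDiscreteValuationRing O]
  [Field F] [Algebra O F] [IsFractionRing O F]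
  [AddCommGroup V] [Module F V] [FiniteDimensional F V]
  [Module O V] [IsScalarTower O F V]

theorem stmt7_latticeBasis (N : Submodule O V) (hfg : N.FG)
    (hfull : Submodule.span F (N : Set V) = ⊤) :
    ∃ B : Module.Basis (Fin (Module.finrank F V)) F V, (∀ i, B i ∈ N) ∧
      ∀ x : V, x ∈ N ↔ ∀ i, B.repr x i ∈ (algebraMap O F).range := by
  haveI : Module.Finite O ↥N := Module.Finite.iff_fg.mpr hfg
  haveI : NoZeroSMulDivisors O ↥N := by
    constructor
    intro c x h
    by_cases hc : c = 0
    · exact Or.inl hc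
    · refine Or.inr ?_
      have h' : c • (x : V) = 0 := by
        have := congrArg (Subtype.val) h
        simpa using this
      have h2 : (algebraMap O F c) • (x : V) = 0 := by
        rwa [algebraMap_smul]
      have hc' : (algebraMap O F c) ≠ 0 := by
        simpa using (IsFractionRing.injective O F).ne hc
      have := (smul_eq_zero.mp h2).resolve_left hc'
      exact Subtype.ext this
  haveI : Module.Free O ↥N := Module.free_of_finite_type_torsion_free'
  let ξ := Module.Free.ChooseBasisIndex O ↥N
  let b0 : Module.Basis ξ O ↥N := Module.Free.chooseBasis O ↥N
  let e : ξ → V := fun i => (b0 i : V)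
  have indepO : LinearIndependent O e := by
    have := b0.linearIndependent
    exact this.map' N.subtype (Submodule.ker_subtype N)
  have indepF : LinearIndependent F e := (LinearIndependent.iff_fractionRing O F).mp indepO
  have spanO : Submodule.span O (Set.range e) = N := by
    have : Set.range e = N.subtype '' (Set.range b0) := by
      rw [← Set.range_comp]; rfl
    rw [this, ← Submodule.map_span, b0.span_eq, Submodule.map_top, Submodule.range_subtype]
  have spanF : Submodule.span F (Set.range e) = ⊤ := by
    refine top_le_iff.mp ?_
    rw [← hfull]
    refine Submodule.span_le.mpr ?_
    intro x hx
    have : x ∈ Submodule.span O (Set.range e) := by rwa [spanO]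
    exact Submodule.span_subset_span O F _ this
  let B0 : Module.Basis ξ F V := Module.Basis.mk indepF (by rw [spanF])
  haveI : Fintype ξ := inferInstance
  have hcard : Fintype.card ξ = Module.finrank F V := (Module.finrank_eq_card_basis B0).symm
  let eq : Fin (Module.finrank F V) ≃ ξ := (Fintype.equivFinOfCardEq hcard).symm
  let B : Module.Basis (Fin (Module.finrank F V)) F V := B0.reindex eq.symm
  have hBe : ∀ i, B i = e (eq i) := by
    intro i
    simp [B, Module.Basis.reindex_apply, B0, Module.Basis.mk_apply]
  have hBmem : ∀ i, B i ∈ N := by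
    intro i
    rw [hBe]
    exact (b0 (eq i)).2
  refine ⟨B, hBmem, ?_⟩
  intro x
  constructor
  · intro hx i
    -- N = span O (range e) ≤ the set of B-integral vectors
    let N' : Submodule O V :=
      { carrier := {x | ∀ i, B.repr x i ∈ (algebraMap O F).range}
        add_mem' := by
          intro x y hx hy i
          rw [map_add]
          exact Subring.add_mem _ (hx i) (hy i)
        zero_mem' := by
          intro i
          rw [map_zero]
          exact Subring.zero_mem _
        smul_mem' := by
          intro c x hx i
          have : c • x = (algebraMap O F c) • x := (algebraMap_smul F c x).symm
          rw [this, map_smul]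
          exact Subring.mul_mem _ ⟨c, rfl⟩ (hx i) }
    have he : ∀ j, e j ∈ N' := by
      intro j i
      have : e j = B (eq.symm j) := by rw [hBe]; simp
      rw [this, B.repr_self]
      rw [Finsupp.single_apply]
      by_cases hij : eq.symm j = i
      · rw [if_pos hij]; exact Subring.one_mem _
      · rw [if_neg hij]; exact Subring.zero_mem _
    have hle : N ≤ N' := by
      rw [← spanO]
      refine Submodule.span_le.mpr ?_
      rintro _ ⟨j, rfl⟩
      exact he j
    exact hle hx i
  · intro h
    have : x = ∑ i, B.repr x i • B i := (B.sum_repr x).symm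
    rw [this]
    refine Submodule.sum_mem N ?_
    intro i _
    obtain ⟨c, hc⟩ := h i
    rw [← hc, algebraMap_smul]
    exact Submodule.smul_mem N c (hBmem i)


variable {n : ℕ}

open scoped Classical

/-- `x` has integral coordinates w.r.t. `B`. -/
def stmt7Bint (B : Module.Basis (Fin n) F V) (x : V) : Prop :=
  ∀ i, B.repr x i ∈ (algebraMap O F).range

noncomputable def stmt7crd (B : Module.Basis (Fin n) F V) (x : V) (i : Fin n) : O :=
  if h : B.repr x i ∈ (algebraMap O F).range then h.choose else 0

theorem stmt7crd_spec (B : Module.Basis (Fin n) F V) {x : V} {i : Fin n}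
    (h : B.repr x i ∈ (algebraMap O F).range) :
    algebraMap O F (stmt7crd (O := O) B x i) = B.repr x i := by
  rw [stmt7crd, dif_pos h]
  exact h.choose_spec

theorem stmt7_sum_crd (B : Module.Basis (Fin n) F V) {x : V} (hx : stmt7Bint (O := O) B x) :
    ∑ i, stmt7crd (O := O) B x i • B i = x := by
  conv_rhs => rw [← B.sum_repr x]
  refine Finset.sum_congr rfl ?_
  intro i _
  rw [← stmt7crd_spec (O := O) B (hx i), algebraMap_smul]

theorem stmt7crd_combo (B : Module.Basis (Fin n) F V) (c : Fin n → O) :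
    stmt7crd (O := O) B (∑ i, c i • B i) = c := by
  have hrepr : ∀ j, B.repr (∑ i, c i • B i) j = algebraMap O F (c j) := by
    intro j
    have : (∑ i, c i • B i) = ∑ i, (algebraMap O F (c i)) • B i := by
      refine Finset.sum_congr rfl fun i _ => ?_
      rw [algebraMap_smul]
    rw [this]
    have := B.repr_sum_self (fun i => algebraMap O F (c i))
    exact congrFun this j
  funext j
  have hmem : B.repr (∑ i, c i • B i) j ∈ (algebraMap O F).range := ⟨c j, (hrepr j).symm⟩
  have := stmt7crd_spec (O := O) B hmem
  rw [hrepr j] at this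
  exact IsFractionRing.injective O F this

theorem stmt7Bint_combo (B : Module.Basis (Fin n) F V) (c : Fin n → O) :
    stmt7Bint (O := O) B (∑ i, c i • B i) := by
  intro j
  have : (∑ i, c i • B i) = ∑ i, (algebraMap O F (c i)) • B i := by
    refine Finset.sum_congr rfl fun i _ => ?_
    rw [algebraMap_smul]
  rw [this]
  have := B.repr_sum_self (fun i => algebraMap O F (c i))
  rw [congrFun this j]
  exact ⟨c j, rfl⟩

theorem stmt7crd_add (B : Module.Basis (Fin n) F V) {x y : V}
    (hx : stmt7Bint (O := O) B x) (hy : stmt7Bint (O := O) B y) :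
    stmt7crd (O := O) B (x + y) = stmt7crd (O := O) B x + stmt7crd (O := O) B y := by
  conv_lhs => rw [← stmt7_sum_crd (O := O) B hx, ← stmt7_sum_crd (O := O) B hy, ← Finset.sum_add_distrib]
  have : ∀ i ∈ Finset.univ, stmt7crd (O := O) B x i • B i + stmt7crd (O := O) B y i • B i
      = (stmt7crd (O := O) B x i + stmt7crd (O := O) B y i) • B i := by
    intro i _; rw [add_smul]
  rw [Finset.sum_congr rfl this, stmt7crd_combo]
  rfl

theorem stmt7crd_smul (B : Module.Basis (Fin n) F V) {x : V} (c : O) (hx : stmt7Bint (O := O) B x) :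
    stmt7crd (O := O) B (c • x) = fun i => c * stmt7crd (O := O) B x i := by
  conv_lhs => rw [← stmt7_sum_crd (O := O) B hx, Finset.smul_sum]
  have : ∀ i ∈ Finset.univ, c • (stmt7crd (O := O) B x i • B i) = (c * stmt7crd (O := O) B x i) • B i := by
    intro i _; rw [smul_smul]
  rw [Finset.sum_congr rfl this, stmt7crd_combo]

theorem stmt7Bint_zero (B : Module.Basis (Fin n) F V) : stmt7Bint (O := O) B (0 : V) := by
  intro i
  rw [map_zero]
  exact Subring.zero_mem _

theorem stmt7Bint_add (B : Module.Basis (Fin n) F V) {x y : V} (hx : stmt7Bint (O := O) B x)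
    (hy : stmt7Bint (O := O) B y) : stmt7Bint (O := O) B (x + y) := by
  intro i
  rw [map_add]
  exact Subring.add_mem _ (hx i) (hy i)

theorem stmt7Bint_smul (B : Module.Basis (Fin n) F V) {x : V} (c : O) (hx : stmt7Bint (O := O) B x) :
    stmt7Bint (O := O) B (c • x) := by
  intro i
  rw [← algebraMap_smul F c x, map_smul]
  exact Subring.mul_mem _ ⟨c, rfl⟩ (hx i)

theorem stmt7Bint_sum (B : Module.Basis (Fin n) F V) {α : Type*} (s : Finset α) (t : α → V)
    (ht : ∀ j ∈ s, stmt7Bint (O := O) B (t j)) : stmt7Bint (O := O) B (∑ j ∈ s, t j) := by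
  classical
  induction s using Finset.induction_on with
  | empty => simpa using stmt7Bint_zero (O := O) B
  | @insert a s' hns ih =>
    rw [Finset.sum_insert hns]
    exact stmt7Bint_add (O := O) B (ht a (Finset.mem_insert_self a s'))
      (ih fun j hj => ht j (Finset.mem_insert_of_mem hj))

section Jmap

variable (ϖ : O)

noncomputable def stmt7J (B : Module.Basis (Fin n) F V) (x : V) :
    Fin n → O ⧸ Ideal.span {ϖ} := fun i => Ideal.Quotient.mk _ (stmt7crd (O := O) B x i)

theorem stmt7J_add (B : Module.Basis (Fin n) F V) {x y : V}
    (hx : stmt7Bint (O := O) B x) (hy : stmt7Bint (O := O) B y) :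
    stmt7J ϖ B (x + y) = stmt7J ϖ B x + stmt7J ϖ B y := by
  funext i
  simp [stmt7J, stmt7crd_add (O := O) B hx hy]

theorem stmt7J_smul (B : Module.Basis (Fin n) F V) {x : V} (c : O) (hx : stmt7Bint (O := O) B x) :
    stmt7J ϖ B (c • x) = (Ideal.Quotient.mk (Ideal.span {ϖ}) c) • stmt7J ϖ B x := by
  funext i
  simp [stmt7J, stmt7crd_smul (O := O) B c hx, Submodule.Quotient.quot_mk_eq_mk]

theorem stmt7J_eq_zero (B : Module.Basis (Fin n) F V) {x : V} (hx : stmt7Bint (O := O) B x) :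
    stmt7J ϖ B x = 0 ↔ ∃ w, stmt7Bint (O := O) B w ∧ x = ϖ • w := by
  constructor
  · intro h
    have hdvd : ∀ i, ∃ d, stmt7crd (O := O) B x i = ϖ * d := by
      intro i
      have : Ideal.Quotient.mk (Ideal.span {ϖ}) (stmt7crd (O := O) B x i) = 0 := congrFun h i
      have := Ideal.Quotient.eq_zero_iff_mem.mp this
      rwa [Ideal.mem_span_singleton] at this
    choose d hd using hdvd
    refine ⟨∑ i, d i • B i, stmt7Bint_combo (O := O) B d, ?_⟩
    rw [Finset.smul_sum]
    conv_lhs => rw [← stmt7_sum_crd (O := O) B hx]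
    refine Finset.sum_congr rfl fun i _ => ?_
    rw [hd i, smul_smul]
  · rintro ⟨w, hw, rfl⟩
    funext i
    rw [stmt7J, stmt7crd_smul (O := O) B ϖ hw]
    exact Ideal.Quotient.eq_zero_iff_mem.mpr (Ideal.mul_mem_right _ _
      (Ideal.subset_span rfl))

theorem stmt7J_zero (B : Module.Basis (Fin n) F V) : stmt7J ϖ B (0 : V) = 0 := by
  have h0 : (0 : V) = (0 : O) • (0 : V) := by rw [zero_smul]
  rw [h0, stmt7J_smul ϖ B 0 (stmt7Bint_zero (O := O) B), map_zero, zero_smul]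

theorem stmt7J_sum (B : Module.Basis (Fin n) F V) {α : Type*} (s : Finset α) (c : α → O) (t : α → V)
    (ht : ∀ j ∈ s, stmt7Bint (O := O) B (t j)) :
    stmt7J ϖ B (∑ j ∈ s, c j • t j) =
      ∑ j ∈ s, (Ideal.Quotient.mk (Ideal.span {ϖ}) (c j)) • stmt7J ϖ B (t j) := by
  classical
  induction s using Finset.induction_on with
  | empty => simpa using stmt7J_zero ϖ B
  | @insert a s' hns ih =>
    rw [Finset.sum_insert hns, Finset.sum_insert hns,
      stmt7J_add ϖ B (stmt7Bint_smul (O := O) B (c a) (ht a (Finset.mem_insert_self a s')))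
        (stmt7Bint_sum (O := O) B s' _ (fun j hj => stmt7Bint_smul (O := O) B (c j)
          (ht j (Finset.mem_insert_of_mem hj)))),
      stmt7J_smul ϖ B (c a) (ht a (Finset.mem_insert_self a s')),
      ih fun j hj => ht j (Finset.mem_insert_of_mem hj)]

end Jmap

section Phi

variable (σ : F ≃+* F) (φ : V →ₗ[F] V →ₛₗ[(σ : F →+* F)] F)

theorem stmt7phi_expand (B : Module.Basis (Fin n) F V) (x w : V) :
    φ x w = ∑ i, B.repr x i * φ (B i) w := by
  conv_lhs => rw [← B.sum_repr x]
  rw [map_sum, LinearMap.sum_apply]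
  refine Finset.sum_congr rfl fun i _ => ?_
  rw [map_smul, LinearMap.smul_apply, smul_eq_mul]

theorem stmt7phi_crd (B : Module.Basis (Fin n) F V) {x : V} (hx : stmt7Bint (O := O) B x)
    (w : V) (g : Fin n → O) (hg : ∀ i, algebraMap O F (g i) = φ (B i) w) :
    φ x w = algebraMap O F (∑ i, stmt7crd (O := O) B x i * g i) := by
  rw [stmt7phi_expand σ φ B x w, map_sum]
  refine Finset.sum_congr rfl fun i _ => ?_
  rw [map_mul, stmt7crd_spec (O := O) B (hx i), hg i]

theorem stmt7phi_mod (ϖ : O) (B : Module.Basis (Fin n) F V) {x : V} (hx : stmt7Bint (O := O) B x)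
    (w : V) (g : Fin n → O) (hg : ∀ i, algebraMap O F (g i) = φ (B i) w) :
    (∃ r, φ x w = algebraMap O F ϖ * algebraMap O F r) ↔
      ∑ i, stmt7J ϖ B x i * Ideal.Quotient.mk (Ideal.span {ϖ}) (g i) = 0 := by
  rw [stmt7phi_crd (O := O) σ φ B hx w g hg]
  have hsum : ∑ i, stmt7J ϖ B x i * Ideal.Quotient.mk (Ideal.span {ϖ}) (g i)
      = Ideal.Quotient.mk (Ideal.span {ϖ}) (∑ i, stmt7crd (O := O) B x i * g i) := by
    rw [map_sum]
    rfl
  rw [hsum, Ideal.Quotient.eq_zero_iff_mem, Ideal.mem_span_singleton]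
  constructor
  · rintro ⟨r, hr⟩
    rw [← map_mul] at hr
    exact ⟨r, IsFractionRing.injective O F hr⟩
  · rintro ⟨r, hr⟩
    exact ⟨r, by rw [hr, map_mul]⟩

end Phi


set_option maxHeartbeats 2000000 in
set_option synthInstance.maxHeartbeats 400000 in
/-- **Lemma A**: for a type-1 vertex lattice `Λ` in a 3-dimensional space, there is no
vector `a ∉ Λ` with `φ(a,Λ) ⊆ O` and `φ(a,a) ∈ O`. -/
theorem stmt7_auxA
    (ϖ : O) (hϖ : Irreducible ϖ)
    (σ : F ≃+* F)
    (hσO : ∀ a : O, σ (algebraMap O F a) ∈ (algebraMap O F).range)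
    (hσϖ : σ (algebraMap O F ϖ) = algebraMap O F ϖ)
    (hdim : Module.finrank F V = 3)
    (φ : V →ₗ[F] V →ₛₗ[(σ : F →+* F)] F)
    (hherm : ∀ x y : V, φ x y = σ (φ y x))
    (Λ : Submodule O V) (hfg : Λ.FG) (hfull : Submodule.span F (Λ : Set V) = ⊤)
    (hint : ∀ x ∈ Λ, ∀ y ∈ Λ, φ x y ∈ (algebraMap O F).range)
    (hvert : ∀ x : V, (∀ y ∈ Λ, φ x y ∈ (algebraMap O F).range) → ϖ • x ∈ Λ)
    (htype1b : ∀ a : V, (∀ y ∈ Λ, φ a y ∈ (algebraMap O F).range) → a ∉ Λ →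
      ∀ x : V, (∀ y ∈ Λ, φ x y ∈ (algebraMap O F).range) → ∃ c : O, x - c • a ∈ Λ)
    (a : V) (ha1 : ∀ y ∈ Λ, φ a y ∈ (algebraMap O F).range) (ha2 : a ∉ Λ)
    (ha3 : φ a a ∈ (algebraMap O F).range) : False := by
  classical
  set ι := algebraMap O F with hι
  have injι : Function.Injective ι := IsFractionRing.injective O F
  have hϖF : ι ϖ ≠ 0 := by
    simpa using injι.ne hϖ.ne_zero
  have hsm : ∀ (c : O) (x : V), c • x = ι c • x := fun c x => (algebraMap_smul F c x).symm
  have φs1 : ∀ (c : O) (x y : V), φ (c • x) y = ι c * φ x y := by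
    intro c x y
    rw [hsm, map_smul, LinearMap.smul_apply, smul_eq_mul]
  have φs2 : ∀ (c : O) (x y : V), φ x (c • y) = σ (ι c) * φ x y := by
    intro c x y
    rw [hsm, LinearMap.map_smulₛₗ, smul_eq_mul]
    rfl
  have hσR : ∀ t ∈ (algebraMap O F).range, σ t ∈ (algebraMap O F).range := by
    rintro t ⟨r, rfl⟩
    exact hσO r
  -- the enlarged lattice `M = Λ + O·a`
  set M : Submodule O V := Λ ⊔ Submodule.span O {a} with hM
  have hΛM : Λ ≤ M := le_sup_left
  have haM : a ∈ M := Submodule.mem_sup_right (Submodule.mem_span_singleton_self a)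
  have hmemM : ∀ x : V, x ∈ M ↔ ∃ y ∈ Λ, ∃ c : O, x = y + c • a := by
    intro x
    rw [hM, Submodule.mem_sup]
    constructor
    · rintro ⟨y, hy, z, hz, rfl⟩
      obtain ⟨c, rfl⟩ := Submodule.mem_span_singleton.mp hz
      exact ⟨y, hy, c, rfl⟩
    · rintro ⟨y, hy, c, rfl⟩
      exact ⟨y, hy, c • a, Submodule.mem_span_singleton.mpr ⟨c, rfl⟩, rfl⟩
  have hϖa : ϖ • a ∈ Λ := hvert a ha1
  have hϖM : ∀ x ∈ M, ϖ • x ∈ Λ := by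
    intro x hx
    obtain ⟨y, hy, c, rfl⟩ := (hmemM x).mp hx
    rw [smul_add, smul_comm]
    exact Λ.add_mem (Λ.smul_mem ϖ hy) (Λ.smul_mem c hϖa)
  have hMint : ∀ x ∈ M, ∀ y ∈ M, φ x y ∈ (algebraMap O F).range := by
    intro x hx y hy
    obtain ⟨x1, hx1, c, rfl⟩ := (hmemM x).mp hx
    obtain ⟨y1, hy1, c', rfl⟩ := (hmemM y).mp hy
    have hexp : φ (x1 + c • a) (y1 + c' • a)
        = φ x1 y1 + σ (ι c') * φ x1 a + (ι c * φ a y1 + ι c * (σ (ι c') * φ a a)) := by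
      simp only [map_add, LinearMap.add_apply, φs1, φs2]
      ring
    rw [hexp]
    have h1 : φ x1 y1 ∈ (algebraMap O F).range := hint _ hx1 _ hy1
    have h2 : φ x1 a ∈ (algebraMap O F).range := by
      rw [hherm]
      exact hσR _ (ha1 _ hx1)
    have h3 : φ a y1 ∈ (algebraMap O F).range := ha1 _ hy1
    refine Subring.add_mem _ (Subring.add_mem _ h1 (Subring.mul_mem _ (hσR _ ⟨c', rfl⟩) h2))
      (Subring.add_mem _ (Subring.mul_mem _ ⟨c, rfl⟩ h3) ?_)
    exact Subring.mul_mem _ ⟨c, rfl⟩ (Subring.mul_mem _ (hσR _ ⟨c', rfl⟩) ha3)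
  have hMfg : M.FG := Submodule.FG.sup hfg (Submodule.fg_span_singleton a)
  have hMfull : Submodule.span F (M : Set V) = ⊤ := by
    refine top_le_iff.mp ?_
    rw [← hfull]
    exact Submodule.span_mono hΛM
  have hdualM : ∀ x : V, (∀ y ∈ Λ, φ x y ∈ (algebraMap O F).range) → x ∈ M := by
    intro x hx
    obtain ⟨c, hc⟩ := htype1b a ha1 ha2 x hx
    have : x = (x - c • a) + c • a := by abel
    rw [this]
    exact M.add_mem (hΛM hc) (M.smul_mem c (haM))
  -- basis of M
  set n := Module.finrank F V with hn
  obtain ⟨B, hBmem, hBcoord⟩ := stmt7_latticeBasis M hMfg hMfull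
  have hBint : ∀ x : V, x ∈ M ↔ stmt7Bint (O := O) B x := hBcoord
  -- residue field
  haveI hmax : (Ideal.span {ϖ}).IsMaximal := PrincipalIdealRing.isMaximal_of_irreducible hϖ
  letI : Field (O ⧸ Ideal.span {ϖ}) := Ideal.Quotient.field _
  set π := Ideal.Quotient.mk (Ideal.span {ϖ}) with hπ
  have πsurj : Function.Surjective π := Ideal.Quotient.mk_surjective
  -- the image of Λ in (M/ϖM)-coordinates
  let S : Submodule (O ⧸ Ideal.span {ϖ}) (Fin n → O ⧸ Ideal.span {ϖ}) :=
    { carrier := {z | ∃ y ∈ Λ, stmt7J ϖ B y = z}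
      add_mem' := by
        rintro z1 z2 ⟨y1, hy1, rfl⟩ ⟨y2, hy2, rfl⟩
        exact ⟨y1 + y2, Λ.add_mem hy1 hy2,
          stmt7J_add ϖ B ((hBint y1).mp (hΛM hy1)) ((hBint y2).mp (hΛM hy2))⟩
      zero_mem' := ⟨0, Λ.zero_mem, stmt7J_zero ϖ B⟩
      smul_mem' := by
        rintro κ z ⟨y, hy, rfl⟩
        obtain ⟨c, rfl⟩ := πsurj κ
        exact ⟨c • y, Λ.smul_mem c hy, stmt7J_smul ϖ B c ((hBint y).mp (hΛM hy))⟩ }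
  have hSne : S ≠ ⊤ := by
    intro htop
    have : stmt7J ϖ B a ∈ S := htop ▸ Submodule.mem_top
    obtain ⟨y, hy, hJy⟩ := this
    have hsub : stmt7J ϖ B (a - y) = 0 := by
      have h1 : stmt7Bint (O := O) B (a - y) := by
        refine (hBint _).mp (M.sub_mem haM (hΛM hy))
      have h2 : (a - y) + y = a := by abel
      have h3 := stmt7J_add ϖ B h1 ((hBint y).mp (hΛM hy))
      rw [h2, hJy] at h3
      exact (right_eq_add.mp h3)
    obtain ⟨w, hw, hϖw⟩ := (stmt7J_eq_zero ϖ B ((hBint _).mp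
      (M.sub_mem haM (hΛM hy)))).mp hsub
    have hwM : w ∈ M := (hBint w).mpr hw
    have : a = y + ϖ • w := by rw [← hϖw]; abel
    exact ha2 (this ▸ Λ.add_mem hy (hϖM w hwM))
  -- dimension count
  have hSlt : S < ⊤ := lt_top_iff_ne_top.mpr hSne
  have hfr : Module.finrank (O ⧸ Ideal.span {ϖ}) (Fin n → O ⧸ Ideal.span {ϖ}) = n := by
    rw [Module.finrank_pi, Fintype.card_fin]
  have hdS : Module.finrank (O ⧸ Ideal.span {ϖ}) ↥S < n := by
    have := Submodule.finrank_lt hSlt.ne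
    rwa [hfr] at this
  set d := Module.finrank (O ⧸ Ideal.span {ϖ}) ↥S with hd
  haveI : Module.Finite (O ⧸ Ideal.span {ϖ}) ↥S := inferInstance
  haveI : Module.Free (O ⧸ Ideal.span {ϖ}) ↥S := Module.Free.of_divisionRing _ _
  let bS : Module.Basis (Fin d) (O ⧸ Ideal.span {ϖ}) ↥S := Module.finBasis _ _
  have hwex : ∀ j : Fin d, ∃ y, y ∈ Λ ∧ stmt7J ϖ B y = (bS j : Fin n → O ⧸ Ideal.span {ϖ}) :=
    fun j => (bS j).2
  choose w hwΛ hwJ using hwex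
  have hgen : ∀ y ∈ Λ, ∃ c : Fin d → O, ∃ m ∈ M, y = (∑ j, c j • w j) + ϖ • m := by
    intro y hy
    have hz : stmt7J ϖ B y ∈ S := ⟨y, hy, rfl⟩
    set z : ↥S := ⟨stmt7J ϖ B y, hz⟩ with hzdef
    have hrep : stmt7J ϖ B y = ∑ j, bS.repr z j • (bS j : Fin n → O ⧸ Ideal.span {ϖ}) := by
      conv_lhs => rw [show stmt7J ϖ B y = (z : Fin n → O ⧸ Ideal.span {ϖ}) from rfl,
        ← bS.sum_repr z]
      rw [Submodule.coe_sum]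
      rfl
    choose c hc using fun j => πsurj (bS.repr z j)
    set t := y - ∑ j, c j • w j with ht
    have hsumΛ : (∑ j, c j • w j) ∈ Λ := Submodule.sum_mem _ fun j _ => Λ.smul_mem _ (hwΛ j)
    have htΛ : t ∈ Λ := Λ.sub_mem hy hsumΛ
    have hJt : stmt7J ϖ B t = 0 := by
      have hs : stmt7J ϖ B (∑ j, c j • w j) = ∑ j, π (c j) • stmt7J ϖ B (w j) :=
        stmt7J_sum ϖ B _ c w (fun j _ => (hBint (w j)).mp (hΛM (hwΛ j)))
      have hadd := stmt7J_add ϖ B ((hBint t).mp (hΛM htΛ)) ((hBint _).mp (hΛM hsumΛ))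
      have ht2 : t + (∑ j, c j • w j) = y := by rw [ht]; abel
      rw [ht2, hs] at hadd
      have hss : ∑ j, π (c j) • stmt7J ϖ B (w j) = stmt7J ϖ B y := by
        rw [hrep]
        exact Finset.sum_congr rfl fun j _ => by rw [hc j, hwJ j]
      rw [hss] at hadd
      exact right_eq_add.mp hadd
    obtain ⟨w0, hw0, hϖw0⟩ := (stmt7J_eq_zero ϖ B ((hBint t).mp (hΛM htΛ))).mp hJt
    refine ⟨c, w0, (hBint w0).mpr hw0, ?_⟩
    rw [← hϖw0, ht]
    abel
  -- Gram coefficients of the conditions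
  have hgex : ∀ (i : Fin n) (j : Fin d), ∃ g : O, ι g = φ (B i) (w j) :=
    fun i j => hMint _ (hBmem i) _ (hΛM (hwΛ j))
  choose g hg using hgex
  let Ltot : (Fin n → O ⧸ Ideal.span {ϖ}) →ₗ[O ⧸ Ideal.span {ϖ}]
      (Fin d → O ⧸ Ideal.span {ϖ}) :=
    LinearMap.pi (fun j => ∑ i, π (g i j) • LinearMap.proj i)
  have hker : LinearMap.ker Ltot ≠ ⊥ := by
    refine LinearMap.ker_ne_bot_of_finrank_lt ?_
    rw [hfr, Module.finrank_pi, Fintype.card_fin]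
    exact hdS
  obtain ⟨z, hzker, hznz⟩ := (Submodule.ne_bot_iff _).mp hker
  choose cz hcz using fun i => πsurj (z i)
  set x := ∑ i, cz i • B i with hx
  have hxBint : stmt7Bint (O := O) B x := stmt7Bint_combo (O := O) B cz
  have hxM : x ∈ M := (hBint x).mpr hxBint
  have hJx : stmt7J ϖ B x = z := by
    funext i
    show π (stmt7crd (O := O) B x i) = z i
    rw [hx, stmt7crd_combo (O := O) B cz]
    exact hcz i
  have hxnϖ : ¬ ∃ m, stmt7Bint (O := O) B m ∧ x = ϖ • m := by
    intro hm
    have := (stmt7J_eq_zero ϖ B hxBint).mpr hm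
    rw [hJx] at this
    exact hznz this
  have hφxw : ∀ j, ∃ r, φ x (w j) = ι ϖ * ι r := by
    intro j
    refine (stmt7phi_mod σ φ ϖ B hxBint (w j) (fun i => g i j) (fun i => hg i j)).mpr ?_
    have h0 : Ltot z = 0 := LinearMap.mem_ker.mp hzker
    have h0j : (∑ i, π (g i j) • LinearMap.proj (R := O ⧸ Ideal.span {ϖ})
        (φ := fun _ : Fin n => O ⧸ Ideal.span {ϖ}) i) z = 0 := congrFun h0 j
    rw [LinearMap.sum_apply] at h0j
    simp only [LinearMap.smul_apply, LinearMap.proj_apply, smul_eq_mul] at h0j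
    rw [hJx]
    calc ∑ i, z i * π (g i j) = ∑ i, π (g i j) * z i :=
          Finset.sum_congr rfl fun i _ => mul_comm _ _
      _ = 0 := h0j
  have hφxΛ : ∀ y ∈ Λ, ∃ r, φ x y = ι ϖ * ι r := by
    intro y hy
    obtain ⟨c, m, hmM, rfl⟩ := hgen y hy
    choose r hr using hφxw
    obtain ⟨rm, hrm⟩ := hMint x hxM m hmM
    choose sc hsc using fun j => hσO (c j)
    refine ⟨(∑ j, sc j * r j) + rm, ?_⟩
    have e1 : φ x ((∑ j, c j • w j) + ϖ • m)
        = (∑ j, σ (ι (c j)) * φ x (w j)) + σ (ι ϖ) * φ x m := by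
      rw [map_add (φ x), map_sum (φ x), φs2 ϖ x m]
      exact congrArg₂ (· + ·) (Finset.sum_congr rfl fun j _ => φs2 (c j) x (w j)) rfl
    rw [e1, hσϖ, ← hrm, map_add ι, map_sum ι]
    have e2 : ∀ j ∈ Finset.univ, σ (ι (c j)) * φ x (w j) = ι ϖ * ι (sc j * r j) := by
      intro j _
      rw [hr j, ← hsc j, map_mul]
      ring
    rw [Finset.sum_congr rfl e2, ← Finset.mul_sum, ← mul_add]
  have hx' : ∀ y ∈ Λ, φ ((ι ϖ)⁻¹ • x) y ∈ (algebraMap O F).range := by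
    intro y hy
    obtain ⟨r, hr⟩ := hφxΛ y hy
    refine ⟨r, ?_⟩
    rw [map_smul, LinearMap.smul_apply, smul_eq_mul, hr, ← mul_assoc,
      inv_mul_cancel₀ hϖF, one_mul]
  have hx'M : ((ι ϖ)⁻¹ • x) ∈ M := hdualM _ hx'
  refine hxnϖ ⟨(ι ϖ)⁻¹ • x, (hBint _).mp hx'M, ?_⟩
  rw [hsm ϖ, smul_smul, mul_inv_cancel₀ hϖF, one_smul]

end Stmt7Aux

set_option maxHeartbeats 2000000 in
set_option synthInstance.maxHeartbeats 400000 in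
/-- 'no zero-dimensional connected components' step of §5.6.  With
`F/F₀`, `O`, `ϖ`, `σ` and a nondegenerate 3-dimensional Hermitian space `(𝕍, φ)` as in
Statement 6, let `u ∈ 𝕍` be a nonzero isotropic vector and `Λ` a type-1 vertex lattice
(`Λ ⊆ Λ^∨ ⊆ ϖ⁻¹Λ` with `dim(Λ^∨/Λ) = 1`) with `u ∈ Λ` and `u ∉ ϖΛ`.  Then there exists
a type-3 vertex lattice `Λ'` (`Λ'^∨ = ϖ⁻¹Λ'`) with `u ∈ Λ' ⊆ Λ`. -/
theorem stmt7
    {O F V : Type*} [CommRing O] [IsDomain O] [IsDiscreteValuationRing O]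
    [IsAdicComplete (IsLocalRing.maximalIdeal O) O]
    [Field F] [Algebra O F] [IsFractionRing O F]
    (ϖ : O) (hϖ : Irreducible ϖ)
    (hres : Finite (O ⧸ Ideal.span {ϖ}))
    (σ : F ≃+* F) (hσinv : ∀ x, σ (σ x) = x)
    (hσO : ∀ a : O, σ (algebraMap O F a) ∈ (algebraMap O F).range)
    (hσϖ : σ (algebraMap O F ϖ) = algebraMap O F ϖ)
    [AddCommGroup V] [Module F V] [FiniteDimensional F V]
    (hdim : Module.finrank F V = 3)
    [Module O V] [IsScalarTower O F V]
    (φ : V →ₗ[F] V →ₛₗ[(σ : F →+* F)] F)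
    (hherm : ∀ x y : V, φ x y = σ (φ y x))
    (hnd : ∀ x : V, (∀ y : V, φ x y = 0) → x = 0)
    (u : V) (hu0 : u ≠ 0) (huiso : φ u u = 0)
    (Λ : Submodule O V) (hfg : Λ.FG) (hfull : Submodule.span F (Λ : Set V) = ⊤)
    -- `Λ ⊆ Λ^∨ ⊆ ϖ⁻¹Λ`:
    (hint : ∀ x ∈ Λ, ∀ y ∈ Λ, φ x y ∈ (algebraMap O F).range)
    (hvert : ∀ x : V, (∀ y ∈ Λ, φ x y ∈ (algebraMap O F).range) → ϖ • x ∈ Λ)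
    -- type 1 : `dim (Λ^∨ / Λ) = 1`
    (htype1a : ∃ a : V, (∀ y ∈ Λ, φ a y ∈ (algebraMap O F).range) ∧ a ∉ Λ)
    (htype1b : ∀ a : V, (∀ y ∈ Λ, φ a y ∈ (algebraMap O F).range) → a ∉ Λ →
      ∀ x : V, (∀ y ∈ Λ, φ x y ∈ (algebraMap O F).range) → ∃ c : O, x - c • a ∈ Λ)
    (huΛ : u ∈ Λ)
    -- `u ∉ ϖΛ`:
    (hunotϖΛ : ∀ w : V, ϖ • w = u → w ∉ Λ) :
    ∃ Λ' : Submodule O V, Λ'.FG ∧ Submodule.span F (Λ' : Set V) = ⊤ ∧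
      u ∈ Λ' ∧ Λ' ≤ Λ ∧
      (∀ x ∈ Λ', ∀ y ∈ Λ', φ x y ∈ (algebraMap O F).range) ∧
      -- type 3 : `Λ'^∨ = ϖ⁻¹Λ'`
      (∀ x : V, (∀ y ∈ Λ', φ x y ∈ (algebraMap O F).range) ↔ ϖ • x ∈ Λ') := by
  classical
  set ι := algebraMap O F with hι
  have injι : Function.Injective ι := IsFractionRing.injective O F
  have hϖF : ι ϖ ≠ 0 := by simpa using injι.ne hϖ.ne_zero
  have hsm : ∀ (c : O) (x : V), c • x = ι c • x := fun c x => (algebraMap_smul F c x).symm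
  have φs1 : ∀ (c : O) (x y : V), φ (c • x) y = ι c * φ x y := by
    intro c x y
    rw [hsm, map_smul, LinearMap.smul_apply, smul_eq_mul]
  have φs2 : ∀ (c : O) (x y : V), φ x (c • y) = σ (ι c) * φ x y := by
    intro c x y
    rw [hsm, LinearMap.map_smulₛₗ, smul_eq_mul]
    rfl
  have hσR : ∀ t ∈ (algebraMap O F).range, σ t ∈ (algebraMap O F).range := by
    rintro t ⟨r, rfl⟩
    exact hσO r
  have hprime : Prime ϖ := UniqueFactorizationMonoid.irreducible_iff_prime.mp hϖ
  have hdvd_of_nonunit : ∀ c : O, ¬ IsUnit c → ϖ ∣ c := by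
    intro c hc
    have : c ∈ IsLocalRing.maximalIdeal O := hc
    rw [hϖ.maximalIdeal_eq, Ideal.mem_span_singleton] at this
    exact this
  -- the submodule `ϖ Λ^∨`
  let Dϖ : Submodule O V :=
    { carrier := {x | ∀ y ∈ Λ, ∃ r : O, φ x y = ι ϖ * ι r}
      add_mem' := by
        intro x x' hx hx' y hy
        obtain ⟨r, hr⟩ := hx y hy
        obtain ⟨r', hr'⟩ := hx' y hy
        refine ⟨r + r', ?_⟩
        rw [map_add, LinearMap.add_apply, hr, hr', map_add]
        ring
      zero_mem' := by
        intro y hy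
        exact ⟨0, by rw [map_zero, LinearMap.zero_apply, map_zero, mul_zero]⟩
      smul_mem' := by
        intro c x hx y hy
        obtain ⟨r, hr⟩ := hx y hy
        refine ⟨c * r, ?_⟩
        rw [φs1, hr, map_mul]
        ring }
  have hDmem : ∀ x : V, x ∈ Dϖ ↔ ∀ y ∈ Λ, ∃ r : O, φ x y = ι ϖ * ι r := fun x => Iff.rfl
  have hDϖΛ : Dϖ ≤ Λ := by
    intro x hx
    have h1 : ∀ y ∈ Λ, φ ((ι ϖ)⁻¹ • x) y ∈ (algebraMap O F).range := by
      intro y hy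
      obtain ⟨r, hr⟩ := hx y hy
      refine ⟨r, ?_⟩
      rw [map_smul, LinearMap.smul_apply, smul_eq_mul, hr, ← mul_assoc,
        inv_mul_cancel₀ hϖF, one_mul]
    have := hvert _ h1
    rwa [hsm ϖ, smul_smul, mul_inv_cancel₀ hϖF, one_smul] at this
  have hϖΛD : ∀ y ∈ Λ, ϖ • y ∈ Dϖ := by
    intro y hy z hz
    obtain ⟨r, hr⟩ := hint y hy z hz
    exact ⟨r, by rw [φs1, ← hr]⟩
  have hϖdualD : ∀ x : V, (∀ y ∈ Λ, φ x y ∈ (algebraMap O F).range) → ϖ • x ∈ Dϖ := by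
    intro x hx z hz
    obtain ⟨r, hr⟩ := hx z hz
    exact ⟨r, by rw [φs1, ← hr]⟩
  -- the vector `v = ϖ⁻¹ u`
  set v := (ι ϖ)⁻¹ • u with hv
  have hϖv : ϖ • v = u := by
    rw [hv, hsm ϖ, smul_smul, mul_inv_cancel₀ hϖF, one_smul]
  have hvΛ : v ∉ Λ := hunotϖΛ v hϖv
  have hφvv : φ v v = 0 := by
    have h0 : φ (ϖ • v) (ϖ • v) = 0 := by rw [hϖv, huiso]
    rw [φs1, φs2, hσϖ] at h0
    exact (mul_eq_zero.mp ((mul_eq_zero.mp h0).resolve_left hϖF)).resolve_left hϖF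
  have hvdual : ¬ (∀ y ∈ Λ, φ v y ∈ (algebraMap O F).range) := by
    intro h
    exact stmt7_auxA ϖ hϖ σ hσO hσϖ hdim φ hherm Λ hfg hfull hint hvert htype1b v h hvΛ
      (by rw [hφvv]; exact Subring.zero_mem _)
  push_neg at hvdual
  obtain ⟨y₀, hy₀, hvy₀⟩ := hvdual
  obtain ⟨μ, hμ⟩ := hint u huΛ y₀ hy₀
  have hφvy₀ : φ v y₀ = (ι ϖ)⁻¹ * φ u y₀ := by
    rw [hv, map_smul, LinearMap.smul_apply, smul_eq_mul]
  have hμunit : ¬ ϖ ∣ μ := by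
    rintro ⟨t, rfl⟩
    refine hvy₀ ⟨t, ?_⟩
    rw [hφvy₀, ← hμ, map_mul, ← mul_assoc, inv_mul_cancel₀ hϖF, one_mul]
  -- the vector `a₀` generating `Λ^∨/Λ`
  obtain ⟨a₀, ha₀1, ha₀2⟩ := htype1a
  have hϖa₀ : ϖ • a₀ ∈ Λ := hvert a₀ ha₀1
  have ha₀notint : φ a₀ a₀ ∉ (algebraMap O F).range := by
    intro h
    exact stmt7_auxA ϖ hϖ σ hσO hσϖ hdim φ hherm Λ hfg hfull hint hvert htype1b a₀ ha₀1 ha₀2 h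
  obtain ⟨ε, hε⟩ : ∃ ε : O, ι ε = ι ϖ * φ a₀ a₀ := by
    have h := ha₀1 _ hϖa₀
    rwa [φs2, hσϖ] at h
  have hεunit : ¬ ϖ ∣ ε := by
    rintro ⟨t, rfl⟩
    refine ha₀notint ⟨t, ?_⟩
    rw [map_mul] at hε
    exact (mul_left_cancel₀ hϖF hε.symm).symm
  -- reflexivity: `(Λ^∨)^∨ = Λ`
  have hrefl : ∀ x : V, (∀ y ∈ Λ, φ x y ∈ (algebraMap O F).range) →
      φ x a₀ ∈ (algebraMap O F).range → x ∈ Λ := by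
    intro x hx hxa
    obtain ⟨c, hc⟩ := htype1b a₀ ha₀1 ha₀2 x hx
    have h1 : φ (x - c • a₀) a₀ ∈ (algebraMap O F).range := by
      rw [hherm]
      exact hσR _ (ha₀1 _ hc)
    have h2 : φ x a₀ = φ (x - c • a₀) a₀ + ι c * φ a₀ a₀ := by
      have hxe : (x - c • a₀) + c • a₀ = x := by abel
      conv_lhs => rw [← hxe]
      rw [map_add, LinearMap.add_apply, φs1]
    have h3 : ι c * φ a₀ a₀ ∈ (algebraMap O F).range := by
      have := Subring.sub_mem _ hxa h1
      rwa [h2, add_sub_cancel_left] at this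
    obtain ⟨t, ht⟩ := h3
    have h4 : c * ε = ϖ * t := by
      apply injι
      rw [map_mul, map_mul, hε, ht]
      ring
    have hcd : ϖ ∣ c := (hprime.dvd_mul.mp ⟨t, h4⟩).resolve_right hεunit
    obtain ⟨c1, rfl⟩ := hcd
    have h5 : x = (x - (ϖ * c1) • a₀) + c1 • (ϖ • a₀) := by
      rw [smul_smul, mul_comm c1 ϖ]
      abel
    rw [h5]
    exact Λ.add_mem hc (Λ.smul_mem _ hϖa₀)
  -- the lattice `Λ' = O·u + ϖΛ^∨`
  set Λ' := Submodule.span O ({u} : Set V) ⊔ Dϖ with hΛ'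
  have hmem' : ∀ x : V, x ∈ Λ' ↔ ∃ c : O, ∃ dd ∈ Dϖ, x = c • u + dd := by
    intro x
    rw [hΛ', Submodule.mem_sup]
    constructor
    · rintro ⟨y, hy, z, hz, rfl⟩
      obtain ⟨c, rfl⟩ := Submodule.mem_span_singleton.mp hy
      exact ⟨c, z, hz, rfl⟩
    · rintro ⟨c, dd, hdd, rfl⟩
      exact ⟨c • u, Submodule.mem_span_singleton.mpr ⟨c, rfl⟩, dd, hdd, rfl⟩
  have hu' : u ∈ Λ' := Submodule.mem_sup_left (Submodule.mem_span_singleton_self u)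
  have hΛ'Λ : Λ' ≤ Λ := by
    rw [hΛ']
    refine sup_le ?_ hDϖΛ
    rw [Submodule.span_le, Set.singleton_subset_iff]
    exact huΛ
  have hD'fg : Dϖ.FG := by
    haveI : IsNoetherian O ↥Λ := isNoetherian_of_fg_of_noetherian Λ hfg
    have h1 : (Dϖ.comap Λ.subtype).FG := IsNoetherian.noetherian _
    have h2 : Submodule.map Λ.subtype (Dϖ.comap Λ.subtype) = Dϖ := by
      rw [Submodule.map_comap_subtype]
      exact inf_eq_right.mpr hDϖΛ
    rw [← h2]
    exact h1.map _
  have hfg' : Λ'.FG := Submodule.FG.sup (Submodule.fg_span_singleton u) hD'fg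
  have hfull' : Submodule.span F (Λ' : Set V) = ⊤ := by
    refine top_le_iff.mp ?_
    rw [← hfull]
    refine Submodule.span_le.mpr ?_
    intro z hz
    have h1 : ϖ • z ∈ Λ' := Submodule.mem_sup_right (hϖΛD z hz)
    have h2 : z = (ι ϖ)⁻¹ • (ϖ • z) := by
      rw [hsm ϖ, smul_smul, inv_mul_cancel₀ hϖF, one_smul]
    rw [h2]
    exact Submodule.smul_mem _ _ (Submodule.subset_span h1)
  have hint' : ∀ x ∈ Λ', ∀ y ∈ Λ', φ x y ∈ (algebraMap O F).range :=
    fun x hx y hy => hint x (hΛ'Λ hx) y (hΛ'Λ hy)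
  refine ⟨Λ', hfg', hfull', hu', hΛ'Λ, hint', ?_⟩
  intro x
  constructor
  · -- hard direction
    intro H
    set s := ϖ • x with hs
    have hs1 : ∀ y : V, (∀ z ∈ Λ, φ y z ∈ (algebraMap O F).range) →
        φ s y ∈ (algebraMap O F).range := by
      intro y hy
      have hϖy' : ϖ • y ∈ Λ' := Submodule.mem_sup_right (hϖdualD y hy)
      have h1 := H _ hϖy'
      have h2 : φ s y = φ x (ϖ • y) := by
        rw [hs, φs1, φs2, hσϖ]
      rwa [h2]
    have hsΛ : s ∈ Λ :=
      hrefl s (fun z hz => hs1 z (fun w hw => hint z hz w hw)) (hs1 a₀ ha₀1)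
    have hsu : ∃ r : O, φ s u = ι ϖ * ι r := by
      obtain ⟨r, hr⟩ := H u hu'
      exact ⟨r, by rw [hs, φs1, ← hr]⟩
    -- the counting argument
    set n := Module.finrank F V with hn
    obtain ⟨B, hBmem, hBcoord⟩ := stmt7_latticeBasis Λ hfg hfull
    have hBint : ∀ z : V, z ∈ Λ ↔ stmt7Bint (O := O) B z := hBcoord
    haveI hmax : (Ideal.span {ϖ}).IsMaximal := PrincipalIdealRing.isMaximal_of_irreducible hϖ
    letI : Field (O ⧸ Ideal.span {ϖ}) := Ideal.Quotient.field _
    set π := Ideal.Quotient.mk (Ideal.span {ϖ}) with hπ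
    have πsurj : Function.Surjective π := Ideal.Quotient.mk_surjective
    choose gu hgu using fun i => hint (B i) (hBmem i) u huΛ
    let ℓbar : (Fin n → O ⧸ Ideal.span {ϖ}) →ₗ[O ⧸ Ideal.span {ϖ}] (O ⧸ Ideal.span {ϖ}) :=
      ∑ i, π (gu i) • LinearMap.proj i
    have hℓap : ∀ z : Fin n → O ⧸ Ideal.span {ϖ}, ℓbar z = ∑ i, z i * π (gu i) := by
      intro z
      rw [LinearMap.sum_apply]
      refine Finset.sum_congr rfl fun i _ => ?_
      rw [LinearMap.smul_apply, LinearMap.proj_apply, smul_eq_mul, mul_comm]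
    have hmod : ∀ z ∈ Λ, ((∃ r : O, φ z u = ι ϖ * ι r) ↔ ℓbar (stmt7J ϖ B z) = 0) := by
      intro z hz
      rw [stmt7phi_mod σ φ ϖ B ((hBint z).mp hz) u gu hgu, hℓap]
    have hJu0 : ℓbar (stmt7J ϖ B u) = 0 :=
      (hmod u huΛ).mp ⟨0, by rw [huiso, map_zero, mul_zero]⟩
    have hJa0 : ℓbar (stmt7J ϖ B (ϖ • a₀)) = 0 := by
      refine (hmod _ hϖa₀).mp ?_
      obtain ⟨r, hr⟩ := ha₀1 u huΛ
      exact ⟨r, by rw [φs1, ← hr]⟩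
    have hJs0 : ℓbar (stmt7J ϖ B s) = 0 := (hmod s hsΛ).mp hsu
    have hJy₀ : ℓbar (stmt7J ϖ B y₀) ≠ 0 := by
      intro h0
      obtain ⟨r, hr⟩ := (hmod y₀ hy₀).mpr h0
      obtain ⟨r', hr'⟩ := hσO r
      have h1 : ι μ = ι ϖ * ι r' := by
        rw [hμ, hherm, hr, map_mul, hσϖ, hr']
      exact hμunit ⟨r', injι (by rw [h1, map_mul])⟩
    -- linear independence of the classes of `u` and `ϖ a₀`
    have hindep : LinearIndependent (O ⧸ Ideal.span {ϖ})
        ![stmt7J ϖ B u, stmt7J ϖ B (ϖ • a₀)] := by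
      rw [LinearIndependent.pair_iff]
      intro α β hαβ
      obtain ⟨cα, rfl⟩ := πsurj α
      obtain ⟨cβ, rfl⟩ := πsurj β
      have hcomb : stmt7J ϖ B (cα • u + cβ • (ϖ • a₀)) = 0 := by
        rw [stmt7J_add ϖ B (stmt7Bint_smul (O := O) B cα ((hBint u).mp huΛ))
            (stmt7Bint_smul (O := O) B cβ ((hBint _).mp hϖa₀)),
          stmt7J_smul ϖ B cα ((hBint u).mp huΛ),
          stmt7J_smul ϖ B cβ ((hBint _).mp hϖa₀)]
        exact hαβ
      obtain ⟨w0, hw0B, hw0⟩ := (stmt7J_eq_zero ϖ B (stmt7Bint_add (O := O) B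
        (stmt7Bint_smul (O := O) B cα ((hBint u).mp huΛ))
        (stmt7Bint_smul (O := O) B cβ ((hBint _).mp hϖa₀)))).mp hcomb
      have hw0Λ : w0 ∈ Λ := (hBint w0).mpr hw0B
      -- `cα u + cβ ϖ a₀ = ϖ w0`
      have hdvdα : ϖ ∣ cα := by
        by_contra hnd'
        have hcunit : IsUnit cα := by
          by_contra hcu
          exact hnd' (hdvd_of_nonunit cα hcu)
        obtain ⟨cu, hcu⟩ := hcunit.exists_left_inv
        have h1 : ϖ • (cα • v) = cα • u := by
          rw [smul_comm, hϖv]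
        have h2 : cα • u = ϖ • (w0 - cβ • a₀) := by
          rw [smul_sub, smul_comm ϖ cβ a₀, ← hw0]
          abel
        have h3 : cα • v = w0 - cβ • a₀ := by
          have h12 := h1.trans h2
          rw [hsm ϖ, hsm ϖ] at h12
          exact smul_right_injective V hϖF h12
        have h4 : v = cu • (w0 - cβ • a₀) := by
          rw [← h3, smul_smul, hcu, one_smul]
        refine hvy₀ ?_
        rw [h4]
        have h5 : φ (cu • (w0 - cβ • a₀)) y₀ = ι cu * (φ w0 y₀ - ι cβ * φ a₀ y₀) := by
          rw [φs1, map_sub, LinearMap.sub_apply, φs1]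
        rw [h5]
        exact Subring.mul_mem _ ⟨cu, rfl⟩ (Subring.sub_mem _ (hint w0 hw0Λ y₀ hy₀)
          (Subring.mul_mem _ ⟨cβ, rfl⟩ (ha₀1 y₀ hy₀)))
      obtain ⟨cα1, rfl⟩ := hdvdα
      have h6 : cβ • a₀ = w0 - cα1 • u := by
        have h7 : ϖ • (cβ • a₀) = ϖ • (w0 - cα1 • u) := by
          rw [smul_comm ϖ cβ a₀, smul_sub, smul_smul ϖ cα1 u, ← hw0]
          abel
        rw [hsm ϖ, hsm ϖ] at h7
        exact smul_right_injective V hϖF h7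
      have hdvdβ : ϖ ∣ cβ := by
        by_contra hnd'
        have hcunit : IsUnit cβ := by
          by_contra hcu
          exact hnd' (hdvd_of_nonunit cβ hcu)
        obtain ⟨cu, hcu⟩ := hcunit.exists_left_inv
        have h8 : a₀ = cu • (w0 - cα1 • u) := by
          rw [← h6, smul_smul, hcu, one_smul]
        refine ha₀2 ?_
        rw [h8, ← h6]
        exact Λ.smul_mem cu (h6 ▸ Λ.sub_mem hw0Λ (Λ.smul_mem cα1 huΛ))
      refine ⟨?_, ?_⟩
      · exact Ideal.Quotient.eq_zero_iff_mem.mpr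
          (Ideal.mem_span_singleton.mpr ⟨cα1, rfl⟩)
      · obtain ⟨cβ1, rfl⟩ := hdvdβ
        exact Ideal.Quotient.eq_zero_iff_mem.mpr
          (Ideal.mem_span_singleton.mpr ⟨cβ1, rfl⟩)
    -- dimension count : `span {J u, J ϖa₀} = ker ℓbar`
    have hfr : Module.finrank (O ⧸ Ideal.span {ϖ}) (Fin n → O ⧸ Ideal.span {ϖ}) = n := by
      rw [Module.finrank_pi, Fintype.card_fin]
    have hn3 : n = 3 := hdim
    have hker2 : Module.finrank (O ⧸ Ideal.span {ϖ}) (LinearMap.ker ℓbar) = 2 := by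
      have h1 := LinearMap.finrank_range_add_finrank_ker ℓbar
      rw [hfr] at h1
      have hrne : LinearMap.range ℓbar ≠ ⊥ := by
        intro hb
        refine hJy₀ ?_
        have ht : ℓbar (stmt7J ϖ B y₀) ∈ LinearMap.range ℓbar := ⟨_, rfl⟩
        rw [hb] at ht
        exact (Submodule.mem_bot _).mp ht
      have hge : Module.finrank (O ⧸ Ideal.span {ϖ}) (LinearMap.range ℓbar) ≠ 0 := by
        intro h0
        exact hrne (Submodule.finrank_eq_zero.mp h0)
      have hle : Module.finrank (O ⧸ Ideal.span {ϖ}) (LinearMap.range ℓbar) ≤ 1 := by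
        have := Submodule.finrank_le (LinearMap.range ℓbar)
        rwa [Module.finrank_self] at this
      omega
    set sp := Submodule.span (O ⧸ Ideal.span {ϖ})
      (Set.range ![stmt7J ϖ B u, stmt7J ϖ B (ϖ • a₀)]) with hsp
    have hsple : sp ≤ LinearMap.ker ℓbar := by
      rw [hsp, Submodule.span_le]
      rintro z ⟨j, rfl⟩
      fin_cases j
      · exact LinearMap.mem_ker.mpr hJu0
      · exact LinearMap.mem_ker.mpr hJa0
    have hspeq : sp = LinearMap.ker ℓbar := by
      refine Submodule.eq_of_le_of_finrank_le hsple ?_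
      rw [hker2, hsp, finrank_span_eq_card hindep]
      simp
    have hssp : stmt7J ϖ B s ∈ sp := by
      rw [hspeq]
      exact LinearMap.mem_ker.mpr hJs0
    rw [hsp, Submodule.mem_span_range_iff_exists_fun] at hssp
    obtain ⟨cc, hcc⟩ := hssp
    choose cO hcO using fun i => πsurj (cc i)
    set q := cO 0 • u + cO 1 • (ϖ • a₀) with hq
    have hqΛ : q ∈ Λ := Λ.add_mem (Λ.smul_mem _ huΛ) (Λ.smul_mem _ hϖa₀)
    have hJq : stmt7J ϖ B q = stmt7J ϖ B s := by
      rw [hq, stmt7J_add ϖ B (stmt7Bint_smul (O := O) B _ ((hBint u).mp huΛ))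
          (stmt7Bint_smul (O := O) B _ ((hBint _).mp hϖa₀)),
        stmt7J_smul ϖ B _ ((hBint u).mp huΛ), stmt7J_smul ϖ B _ ((hBint _).mp hϖa₀),
        hcO 0, hcO 1]
      rw [← hcc, Fin.sum_univ_two]
      simp
    have hJsq : stmt7J ϖ B (s - q) = 0 := by
      have h1 := stmt7J_add ϖ B ((hBint _).mp (Λ.sub_mem hsΛ hqΛ)) ((hBint q).mp hqΛ)
      have h2 : (s - q) + q = s := by abel
      rw [h2, ← hJq] at h1
      exact right_eq_add.mp h1
    obtain ⟨w1, hw1B, hw1⟩ := (stmt7J_eq_zero ϖ B ((hBint _).mp (Λ.sub_mem hsΛ hqΛ))).mp hJsq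
    have hw1Λ : w1 ∈ Λ := (hBint w1).mpr hw1B
    -- finally : `s ∈ Λ'`
    have hse : s = cO 0 • u + (cO 1 • (ϖ • a₀) + ϖ • w1) := by
      have : s = q + (s - q) := by abel
      rw [this, hw1, hq]
      abel
    rw [hse]
    refine Submodule.add_mem _ (Submodule.mem_sup_left
      (Submodule.smul_mem _ _ (Submodule.mem_span_singleton_self u))) (Submodule.mem_sup_right ?_)
    refine Submodule.add_mem _ (Submodule.smul_mem _ _ (hϖdualD a₀ ha₀1)) (hϖΛD w1 hw1Λ)
  · -- easy direction
    intro hϖx y hy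
    obtain ⟨c, dd, hdd, hϖxeq⟩ := (hmem' _).mp hϖx
    obtain ⟨c', dd', hdd', rfl⟩ := (hmem' _).mp hy
    -- `φ u y ∈ ϖ O`
    obtain ⟨r1, hr1⟩ := hdd' u huΛ
    obtain ⟨r1', hr1'⟩ := hσO r1
    have hφuy : φ u (c' • u + dd') = ι ϖ * ι r1' := by
      rw [map_add ((φ u)), φs2, huiso, mul_zero, zero_add, hherm, hr1, map_mul, hσϖ, hr1']
    obtain ⟨r2, hr2⟩ := hdd (c' • u + dd') (hΛ'Λ hy)
    have hφxy : φ (ϖ • x) (c' • u + dd') = ι ϖ * (ι c * ι r1' + ι r2) := by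
      rw [hϖxeq]
      have e : φ (c • u + dd) (c' • u + dd')
          = ι c * φ u (c' • u + dd') + φ dd (c' • u + dd') := by
        rw [map_add φ (c • u) dd, LinearMap.add_apply, φs1]
      rw [e, hφuy, hr2]
      ring
    refine ⟨c * r1' + r2, ?_⟩
    have h1 : φ x (c' • u + dd') = (ι ϖ)⁻¹ * φ (ϖ • x) (c' • u + dd') := by
      rw [φs1, ← mul_assoc, inv_mul_cancel₀ hϖF, one_mul]
    rw [h1, hφxy, ← mul_assoc, inv_mul_cancel₀ hϖF, one_mul, map_add, map_mul]
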